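/- Let ϑ : (0,∞) → (1,∞) be non-decreasing and satisfy (ϑ3): ∃ r ∈ (0,1), λ ∈ (0,∞] with lim_{t→0⁺}(ϑ(t)−1)/tʳ = λ. Let {σₙ} ⊂ (0,∞) be a decreasing sequence with 1 < ϑ(σₙ) ≤ [ϑ(σ₀)]^{kⁿ} for all n ≥ 1 and some k ∈ (0,1). Then lim_{n→∞} σₙ = 0 and lim_{n→∞} n·σₙʳ = 0. -/

import Mathlib

open Filter Topology

theorem stmt_18 (ϑ : ℝ → ℝ) (hϑ1 : ∀ t > 0, 1 < ϑ t)
    (hϑm : MonotoneOn ϑ (Set.Ioi 0))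
    (r : ℝ) (hr : r ∈ Set.Ioo (0 : ℝ) 1)
    (hϑ3 : Tendsto (fun t => (ϑ t - 1) / t ^ r) (𝓝[>] 0) atTop ∨
      ∃ l : ℝ, 0 < l ∧ Tendsto (fun t => (ϑ t - 1) / t ^ r) (𝓝[>] 0) (𝓝 l))
    (k : ℝ) (hk : k ∈ Set.Ioo (0 : ℝ) 1)
    (σ : ℕ → ℝ) (hσ : ∀ n, 0 < σ n) (hdec : Antitone σ)
    (hbound : ∀ n : ℕ, 1 ≤ n → 1 < ϑ (σ n) ∧ ϑ (σ n) ≤ ϑ (σ 0) ^ (k ^ n)) :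
    Tendsto σ atTop (𝓝 0) ∧
    Tendsto (fun n : ℕ => (n : ℝ) * σ n ^ r) atTop (𝓝 0) := by
  obtain ⟨hk0, hk1⟩ := hk
  obtain ⟨hr0, hr1⟩ := hr
  set A := ϑ (σ 0) with hA
  have hA1 : 1 < A := hϑ1 _ (hσ 0)
  have hA0 : (0 : ℝ) < A := lt_trans one_pos hA1
  have hkpow : Tendsto (fun n : ℕ => k ^ n) atTop (𝓝 0) :=
    tendsto_pow_atTop_nhds_zero_of_lt_one hk0.le hk1
  have hApow : Tendsto (fun n : ℕ => A ^ (k ^ n)) atTop (𝓝 1) := by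
    have hc : Continuous fun x : ℝ => A ^ x := by
      simp only [Real.rpow_def_of_pos hA0]
      exact Real.continuous_exp.comp (continuous_const.mul continuous_id)
    have := (hc.tendsto 0).comp hkpow
    simpa [Real.rpow_zero, Function.comp_def] using this
  -- First conclusion
  have hσ0 : Tendsto σ atTop (𝓝 0) := by
    rw [tendsto_order]
    constructor
    · intro a ha
      exact Eventually.of_forall fun n => lt_trans ha (hσ n)
    · intro ε hε
      have hϑε : 1 < ϑ ε := hϑ1 ε hε
      filter_upwards [hApow.eventually_lt_const hϑε, eventually_ge_atTop 1] with n h1 h2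
      by_contra h
      push_neg at h
      have hmon := hϑm (Set.mem_Ioi.2 hε) (Set.mem_Ioi.2 (hσ n)) h
      have hb := (hbound n h2).2
      linarith
  refine ⟨hσ0, ?_⟩
  -- get lower bound c * t ^ r ≤ ϑ t - 1 near 0
  have hev : ∃ c : ℝ, 0 < c ∧ ∀ᶠ t in 𝓝[>] (0:ℝ), c ≤ (ϑ t - 1) / t ^ r := by
    rcases hϑ3 with h | ⟨l, hl, h⟩
    · exact ⟨1, one_pos, h.eventually_ge_atTop 1⟩
    · exact ⟨l / 2, by linarith, (h.eventually_const_lt (by linarith : l / 2 < l)).mono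
        fun t ht => ht.le⟩
  obtain ⟨c, hc, hevc⟩ := hev
  rw [eventually_nhdsWithin_iff, Metric.eventually_nhds_iff] at hevc
  obtain ⟨δ, hδ, hlow⟩ := hevc
  have hlow' : ∀ t : ℝ, 0 < t → t < δ → c * t ^ r ≤ ϑ t - 1 := by
    intro t ht htδ
    have hd : dist t 0 < δ := by
      rw [Real.dist_eq, sub_zero, abs_of_pos ht]; exact htδ
    have := hlow hd (Set.mem_Ioi.2 ht)
    have htr : (0:ℝ) < t ^ r := Real.rpow_pos_of_pos ht r
    rwa [le_div_iff₀ htr] at this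
  have hsmall : ∀ᶠ n : ℕ in atTop, σ n < δ := hσ0.eventually_lt_const hδ
  set C := A * Real.log A / c with hC
  have hlogA : 0 ≤ Real.log A := Real.log_nonneg hA1.le
  have key : ∀ᶠ n : ℕ in atTop, (n : ℝ) * σ n ^ r ≤ C * ((n : ℝ) * k ^ n) := by
    filter_upwards [hsmall, eventually_ge_atTop 1] with n hnδ hn1
    have h1 : c * σ n ^ r ≤ ϑ (σ n) - 1 := hlow' _ (hσ n) hnδ
    have h2 : ϑ (σ n) - 1 ≤ A ^ (k ^ n) - 1 := by
      have := (hbound n hn1).2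
      linarith
    have hkn0 : 0 ≤ k ^ n := pow_nonneg hk0.le n
    have hkn1 : k ^ n ≤ 1 := pow_le_one₀ hk0.le hk1.le
    have h3 : A ^ (k ^ n) - 1 ≤ k ^ n * Real.log A * A := by
      rw [Real.rpow_def_of_pos hA0]
      set x := Real.log A * k ^ n with hx
      have hx0 : 0 ≤ x := mul_nonneg hlogA hkn0
      have hx1 : x ≤ Real.log A := by nlinarith
      have e1 : Real.exp x ≤ A := by
        rw [← Real.exp_log hA0]; exact Real.exp_le_exp.2 hx1
      have e2 : Real.exp x - 1 ≤ x * Real.exp x := by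
        have h5 := Real.add_one_le_exp (-x)
        have hprod : Real.exp (-x) * Real.exp x = 1 := by
          rw [← Real.exp_add]; simp
        have hpos := Real.exp_pos x
        nlinarith [mul_le_mul_of_nonneg_right h5 hpos.le]
      calc Real.exp x - 1 ≤ x * Real.exp x := e2
        _ ≤ x * A := by nlinarith
        _ = k ^ n * Real.log A * A := by rw [hx]; ring
    have h4 : σ n ^ r ≤ C * k ^ n := by
      rw [hC, div_mul_eq_mul_div, le_div_iff₀ hc]
      calc σ n ^ r * c = c * σ n ^ r := by ring
        _ ≤ k ^ n * Real.log A * A := le_trans h1 (le_trans h2 h3)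
        _ = A * Real.log A * k ^ n := by ring
    have hn0 : (0:ℝ) ≤ (n : ℝ) := Nat.cast_nonneg n
    calc (n : ℝ) * σ n ^ r ≤ (n : ℝ) * (C * k ^ n) := by
          exact mul_le_mul_of_nonneg_left h4 hn0
      _ = C * ((n : ℝ) * k ^ n) := by ring
  have hnk : Tendsto (fun n : ℕ => (n : ℝ) * k ^ n) atTop (𝓝 0) := by
    have hs : Summable (fun n : ℕ => (n : ℝ) ^ 1 * k ^ n) :=
      summable_pow_mul_geometric_of_norm_lt_one 1 (by rwa [Real.norm_eq_abs, abs_of_pos hk0])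
    have := hs.tendsto_atTop_zero
    simpa using this
  have hg : Tendsto (fun n : ℕ => C * ((n : ℝ) * k ^ n)) atTop (𝓝 0) := by
    simpa using hnk.const_mul C
  refine squeeze_zero' ?_ key hg
  filter_upwards with n
  exact mul_nonneg (Nat.cast_nonneg n) (Real.rpow_pos_of_pos (hσ n) r).le
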